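/- arXiv:1912.13078 — 3 statements merged into one kernel-verified Lean document; each statement's English description precedes it below -/
import Mathlib

section
/- Fix $\epsilon,\beta \in (0,1)$ and positive integers $n_1, n_2, m_1, m_2$ with $m_2 \geq n_2+1$. If $N \geq \frac{2}{\epsilon}\log\frac{1}{\beta} + \frac{4n_1 n_2}{\epsilon}\big(\log(\frac{m_2}{n_2+1})+1\big) + \frac{2n_1}{\epsilon}\big(\log(\frac{m_1}{n_1}+2) + \log\frac{2}{\epsilon} + 1\big) + 2n_1$, then $\binom{N}{n_1}\frac{1}{n_1!}(2n_1+m_1)^{n_1}\Big(\frac{m_2^{n_2+1}}{(n_2+1)!}\Big)^{2n_1}(1-\epsilon)^{N-n_1} \leq \beta$. -/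
open Real

lemma log_factorial_lb (k : ℕ) : (k:ℝ) * Real.log k - k ≤ Real.log (k.factorial) := by
  induction k with
  | zero => simp
  | succ n ih =>
    rcases Nat.eq_zero_or_pos n with h | h
    · subst h; norm_num [Nat.factorial]
    · have hn : (0:ℝ) < n := by exact_mod_cast h
      have h1 : Real.log (((n:ℝ)+1)/n) ≤ ((n:ℝ)+1)/n - 1 :=
        Real.log_le_sub_one_of_pos (by positivity)
      rw [Real.log_div (by positivity) (by positivity)] at h1
      have h2 : ((n:ℝ)+1)/n - 1 = 1/n := by field_simp; ring
      rw [h2] at h1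
      have h3 : (n:ℝ) * (Real.log ((n:ℝ)+1) - Real.log n) ≤ (n:ℝ) * (1/n) :=
        mul_le_mul_of_nonneg_left h1 hn.le
      have h4 : (n:ℝ) * (1/n) = 1 := by field_simp
      have hfs : Real.log ((n+1).factorial : ℝ)
          = Real.log ((n:ℝ)+1) + Real.log (n.factorial : ℝ) := by
        rw [Nat.factorial_succ]
        push_cast
        rw [Real.log_mul (by positivity) (by exact_mod_cast n.factorial_pos.ne')]
      push_cast
      rw [hfs]
      nlinarith [ih]

set_option maxHeartbeats 1000000 in
/-- Sample size estimate (Corollary 1, analytic part): if `N` is at least the stated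
threshold, then
`C(N,n₁) (1/n₁!) (2n₁+m₁)^{n₁} (m₂^{n₂+1}/(n₂+1)!)^{2n₁} (1-ε)^{N-n₁} ≤ β`. -/
theorem saa_sample_size_estimate
    (ε β : ℝ) (hε : ε ∈ Set.Ioo (0 : ℝ) 1) (hβ : β ∈ Set.Ioo (0 : ℝ) 1)
    (n1 n2 m1 m2 : ℕ) (hn1 : 0 < n1) (hn2 : 0 < n2) (hm1 : 0 < m1)
    (hm2 : n2 + 1 ≤ m2) (N : ℕ)
    (hN : (2 / ε) * Real.log (1 / β)
        + (4 * n1 * n2 / ε) * (Real.log ((m2 : ℝ) / (n2 + 1)) + 1)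
        + (2 * n1 / ε) * (Real.log ((m1 : ℝ) / n1 + 2) + Real.log (2 / ε) + 1)
        + 2 * n1 ≤ (N : ℝ)) :
    (N.choose n1 : ℝ) * (1 / (n1.factorial : ℝ)) * (2 * n1 + m1 : ℝ) ^ n1 *
        ((m2 : ℝ) ^ (n2 + 1) / ((n2 + 1).factorial : ℝ)) ^ (2 * n1) *
        (1 - ε) ^ (N - n1) ≤ β := by
  obtain ⟨hε0, hε1⟩ := hε
  obtain ⟨hβ0, hβ1⟩ := hβ
  have hn1R : (0:ℝ) < n1 := by exact_mod_cast hn1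
  have hn2R : (0:ℝ) < n2 := by exact_mod_cast hn2
  have hn1R1 : (1:ℝ) ≤ n1 := by exact_mod_cast hn1
  have hn2R1 : (1:ℝ) ≤ n2 := by exact_mod_cast hn2
  have hm2R : (n2:ℝ) + 1 ≤ m2 := by exact_mod_cast hm2
  have hm2pos : (0:ℝ) < m2 := by linarith
  set L1 := Real.log ((m1:ℝ)/n1 + 2) with hL1def
  set L2 := Real.log ((m2:ℝ)/((n2:ℝ)+1)) with hL2def
  set Le := Real.log (2/ε) with hLedef
  set b := Real.log (1/β) with hbdef
  set H : ℝ := (2/ε) * b + (4*(n1:ℝ)*(n2:ℝ)/ε) * (L2+1) + (2*(n1:ℝ)/ε) * (L1 + Le + 1)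
      + 2*(n1:ℝ) with hHdef
  clear_value L1 L2 Le b H
  have hHN : H ≤ (N:ℝ) := hN
  -- basic positivity facts
  have hb : 0 < b := by
    rw [hbdef]; exact Real.log_pos (by rw [lt_div_iff₀ hβ0]; linarith)
  have hL1 : 0 ≤ L1 := by
    rw [hL1def]; apply Real.log_nonneg; have : (0:ℝ) ≤ (m1:ℝ)/n1 := by positivity
    linarith
  have hL2 : 0 ≤ L2 := by
    rw [hL2def]; apply Real.log_nonneg; rw [le_div_iff₀ (by positivity)]; linarith
  have hLe0 : 0 ≤ Le := by
    rw [hLedef]; apply Real.log_nonneg; rw [le_div_iff₀ hε0]; linarith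
  have hLe' : Le ≤ 2/ε - 1 := by
    rw [hLedef]; exact Real.log_le_sub_one_of_pos (by positivity)
  have hLer : Le = Real.log 2 - Real.log ε := by
    rw [hLedef, Real.log_div (by norm_num) hε0.ne']
  have hεH : ε * H = 2*b + 4*(n1:ℝ)*(n2:ℝ)*(L2+1) + 2*(n1:ℝ)*(L1+Le+1) + 2*ε*(n1:ℝ) := by
    rw [hHdef]; field_simp
  have hprod1 : (0:ℝ) ≤ 4*(n1:ℝ)*(n2:ℝ)*(L2+1) := by
    have : (0:ℝ) ≤ L2 + 1 := by linarith
    positivity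
  have hprod2 : (0:ℝ) ≤ 2*(n1:ℝ)*(L1+Le) := by positivity
  have h2n1H : 2*(n1:ℝ) ≤ ε*H := by rw [hεH]; nlinarith
  have hHpos : 0 < H := by nlinarith
  have hNpos : (0:ℝ) < N := lt_of_lt_of_le hHpos hN
  have hn1N : (n1:ℝ) ≤ N := by nlinarith
  have hn1Nnat : n1 ≤ N := by exact_mod_cast hn1N
  set e' := ε + ε^2/4 with he'def
  clear_value e'
  have he'pos : 0 < e' := by rw [he'def]; positivity
  have hεe' : ε ≤ e' := by rw [he'def]; nlinarith [sq_nonneg ε]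
  have he'1 : e' ≤ 5/4 := by rw [he'def]; nlinarith
  -- key exponential bound : 1 - ε ≤ exp (-e')
  have hexp : 1 - ε ≤ Real.exp (-e') := by
    have h1 : 1 - e'/2 ≤ Real.exp (-(e'/2)) := by
      have := Real.add_one_le_exp (-(e'/2)); linarith
    have h3 : (0:ℝ) ≤ 1 - e'/2 := by nlinarith
    calc 1 - ε ≤ (1 - e'/2)^2 := by nlinarith
      _ ≤ (Real.exp (-(e'/2)))^2 := by
          apply pow_le_pow_left₀ h3 h1
      _ = Real.exp (-e') := by
          rw [sq, ← Real.exp_add]; ring_nf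
  set M := N - n1 with hMdef
  clear_value M
  have hMcast : (M:ℝ) = (N:ℝ) - n1 := by
    rw [hMdef]; push_cast [hn1Nnat]; ring
  have hpowM : (1-ε)^M ≤ Real.exp (-(e' * M)) := by
    calc (1-ε)^M ≤ (Real.exp (-e'))^M := pow_le_pow_left₀ (by linarith) hexp M
      _ = Real.exp (-(e' * M)) := by rw [← Real.exp_nat_mul]; congr 1; ring
  -- the upper bound B
  have hfac1 : (0:ℝ) < n1.factorial := by exact_mod_cast n1.factorial_pos
  have hfac2 : (0:ℝ) < (n2+1).factorial := by exact_mod_cast (n2+1).factorial_pos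
  set P1 : ℝ := 2*(n1:ℝ) + m1 with hP1def
  set P2 : ℝ := (m2:ℝ)^(n2+1)/((n2+1).factorial : ℝ) with hP2def
  clear_value P1 P2
  have hP1pos : 0 < P1 := by rw [hP1def]; positivity
  have hP2pos : 0 < P2 := by rw [hP2def]; positivity
  set B : ℝ := ((N:ℝ)^n1/(n1.factorial:ℝ)) * (1/(n1.factorial:ℝ)) * P1^n1 * P2^(2*n1)
      * Real.exp (-(e' * M)) with hBdef
  clear_value B
  have hchoose : (N.choose n1 : ℝ) ≤ (N:ℝ)^n1 / (n1.factorial:ℝ) := by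
    have := Nat.choose_le_pow_div (α := ℝ) n1 N
    push_cast at this ⊢
    convert this using 2
  have hAB : (N.choose n1 : ℝ) * (1 / (n1.factorial : ℝ)) * P1 ^ n1 * P2 ^ (2 * n1) *
      (1 - ε) ^ M ≤ B := by
    rw [hBdef]
    have h1 : (0:ℝ) ≤ (1 - ε)^M := pow_nonneg (by linarith) M
    have h2 : (0:ℝ) ≤ P1^n1 := by positivity
    have h3 : (0:ℝ) ≤ P2^(2*n1) := by positivity
    have h4 : (0:ℝ) ≤ 1/(n1.factorial:ℝ) := by positivity
    have h5 : (0:ℝ) ≤ (N:ℝ)^n1/(n1.factorial:ℝ) := by positivity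
    apply mul_le_mul _ hpowM h1 (by positivity)
    apply mul_le_mul_of_nonneg_right _ h3
    apply mul_le_mul_of_nonneg_right _ h2
    exact mul_le_mul_of_nonneg_right hchoose h4
  have hBpos : 0 < B := by
    rw [hBdef]
    have : (0:ℝ) < (N:ℝ)^n1 := pow_pos hNpos n1
    positivity
  -- it suffices to bound log B
  suffices hlog : Real.log B ≤ Real.log β by
    calc (N.choose n1 : ℝ) * (1 / (n1.factorial : ℝ)) * P1 ^ n1 * P2 ^ (2 * n1) *
        (1 - ε) ^ M ≤ B := hAB
      _ ≤ β := (Real.log_le_log_iff hBpos hβ0).mp hlog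
  have hlogβ : Real.log β = -b := by rw [hbdef, one_div, Real.log_inv]; ring
  have hlogBeq : Real.log B = (n1:ℝ) * Real.log N - Real.log (n1.factorial:ℝ)
      - Real.log (n1.factorial:ℝ) + (n1:ℝ) * Real.log P1 + 2*(n1:ℝ) * Real.log P2
      - e' * M := by
    rw [hBdef, Real.log_mul (by positivity) (Real.exp_pos _).ne',
      Real.log_mul (by positivity) (pow_pos hP2pos _).ne',
      Real.log_mul (by positivity) (pow_pos hP1pos _).ne',
      Real.log_mul (by positivity) (by positivity : (1/(n1.factorial:ℝ)) ≠ 0),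
      Real.log_div (pow_pos hNpos n1).ne' hfac1.ne', Real.log_pow, Real.log_pow,
      Real.log_pow, Real.log_exp, one_div, Real.log_inv]
    push_cast
    ring
  -- factorial bounds
  have hlf1 : (n1:ℝ)*Real.log n1 - n1 ≤ Real.log (n1.factorial:ℝ) := log_factorial_lb n1
  have hlf2 : ((n2:ℝ)+1)*Real.log ((n2:ℝ)+1) - ((n2:ℝ)+1) ≤ Real.log ((n2+1).factorial:ℝ) := by
    have := log_factorial_lb (n2+1)
    push_cast at this
    convert this using 3 <;> push_cast <;> ring
  have hlogP1 : Real.log P1 = Real.log n1 + L1 := by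
    have hP1eq : P1 = (n1:ℝ) * ((m1:ℝ)/n1 + 2) := by rw [hP1def]; field_simp; ring
    rw [hP1eq, Real.log_mul hn1R.ne' (by positivity), hL1def]
  have hL2eq : Real.log (m2:ℝ) - Real.log ((n2:ℝ)+1) = L2 := by
    rw [hL2def, Real.log_div hm2pos.ne' (by positivity)]
  have hlogP2 : Real.log P2 ≤ ((n2:ℝ)+1)*(L2+1) := by
    have h0 : Real.log P2 = ((n2:ℝ)+1)*Real.log (m2:ℝ) - Real.log ((n2+1).factorial:ℝ) := by
      rw [hP2def, Real.log_div (by positivity) hfac2.ne', Real.log_pow]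
      push_cast; ring
    calc Real.log P2 ≤ ((n2:ℝ)+1)*Real.log (m2:ℝ)
          - (((n2:ℝ)+1)*Real.log ((n2:ℝ)+1) - ((n2:ℝ)+1)) := by rw [h0]; linarith
      _ = ((n2:ℝ)+1)*(L2+1) := by rw [← hL2eq]; ring
  -- monotonicity step: enough to consider N = H
  have hmono : (n1:ℝ)*Real.log N - e'*N ≤ (n1:ℝ)*Real.log H - e'*H := by
    have h1 : Real.log (N:ℝ) - Real.log H ≤ (N:ℝ)/H - 1 := by
      rw [← Real.log_div hNpos.ne' hHpos.ne']
      exact Real.log_le_sub_one_of_pos (by positivity)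
    have h2 : (n1:ℝ) ≤ e'*H := by
      have h2a : ε*H ≤ e'*H := mul_le_mul_of_nonneg_right hεe' hHpos.le
      linarith
    have h3 : (n1:ℝ)*(Real.log (N:ℝ) - Real.log H) ≤ (n1:ℝ)*((N:ℝ)/H - 1) :=
      mul_le_mul_of_nonneg_left h1 hn1R.le
    have h4 : (n1:ℝ)*((N:ℝ)/H - 1) ≤ e'*((N:ℝ) - H) := by
      have h5 : (0:ℝ) ≤ (N:ℝ) - H := by linarith
      have h6 : (n1:ℝ)*((N:ℝ)/H - 1) = ((n1:ℝ)/H)*((N:ℝ)-H) := by field_simp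
      rw [h6]
      apply mul_le_mul_of_nonneg_right _ h5
      rw [div_le_iff₀ hHpos]
      linarith
    linarith [h3, h4]
  -- the W decomposition of H
  set c : ℝ := b/(n1:ℝ) with hcdef
  have hc0 : (0:ℝ) ≤ c := by rw [hcdef]; positivity
  clear_value c
  set W : ℝ := 2*c + 4*(n2:ℝ)*(L2+1) + 2*(L1+Le+1) + 2*ε with hWdef
  clear_value W
  have hWlb : (0:ℝ) < W := by
    have h1 : (0:ℝ) ≤ 2*c := by positivity
    have h2 : (0:ℝ) ≤ 4*(n2:ℝ)*(L2+1) := by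
      have : (0:ℝ) ≤ L2 + 1 := by linarith
      positivity
    linarith [h1, h2, hε0]
  have hHW : H = ((n1:ℝ)/ε) * W := by rw [hHdef, hWdef, hcdef]; field_simp
  have hlogH : Real.log H = Real.log n1 + (Le - Real.log 2) + Real.log W := by
    rw [hHW, Real.log_mul (by positivity) hWlb.ne', Real.log_div hn1R.ne' hε0.ne', hLer]
    ring
  set t : ℝ := c + L1 + ε*((n2:ℝ)*(L2+1)) + 3*ε/2 with htdef
  clear_value t
  have ht0 : (0:ℝ) ≤ t := by
    have h1 : (0:ℝ) ≤ c := hc0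
    have h2 : (0:ℝ) ≤ ε*((n2:ℝ)*(L2+1)) := by
      have : (0:ℝ) ≤ L2 + 1 := by linarith
      positivity
    rw [htdef]
    linarith [h1, h2]
  -- the key log W estimate
  have hεW : ε*W ≤ 4*(1+t) := by
    rw [hWdef, htdef]
    have e1 : ε*(2/ε) = 2 := by field_simp
    have e2 : ε*Le ≤ 2 - ε := by
      have e2a := mul_le_mul_of_nonneg_left hLe' hε0.le
      have e2b : ε*(2/ε - 1) = 2 - ε := by rw [mul_sub, e1, mul_one]
      linarith [e2a, e2b]
    have e3 : ε*c ≤ c := by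
      linarith [mul_nonneg (show (0:ℝ) ≤ 1 - ε by linarith) hc0]
    have e4 : ε*L1 ≤ L1 := by
      linarith [mul_nonneg (show (0:ℝ) ≤ 1 - ε by linarith) hL1]
    have e5 : ε^2 ≤ ε := by
      have h := mul_le_mul_of_nonneg_left hε1.le hε0.le
      calc ε^2 = ε*ε := pow_two ε
        _ ≤ ε*1 := h
        _ = ε := mul_one ε
    linarith only [e2, e3, e4, e5, hL1, hε0, hc0]
  have hW4 : W ≤ 4*(1+t)/ε := by rw [le_div_iff₀ hε0]; linarith [hεW]
  have hlogW : Real.log W ≤ Real.log 2 + Le + t := by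
    have h1t : (0:ℝ) < 1 + t := by linarith
    have hlog4 : Real.log 4 = 2*Real.log 2 := by
      rw [show (4:ℝ) = 2^2 by norm_num, Real.log_pow]; push_cast; ring
    calc Real.log W ≤ Real.log (4*(1+t)/ε) := Real.log_le_log hWlb hW4
      _ = Real.log 4 + Real.log (1+t) - Real.log ε := by
          rw [Real.log_div (by positivity) hε0.ne', Real.log_mul (by norm_num) h1t.ne']
      _ ≤ Real.log 4 + t - Real.log ε := by
          linarith [Real.log_le_sub_one_of_pos h1t]
      _ = Real.log 2 + Le + t := by rw [hlog4, hLer]; ring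
  -- final assembly
  have hn1logW : (n1:ℝ)*Real.log W ≤ (n1:ℝ)*(Real.log 2 + Le + t) :=
    mul_le_mul_of_nonneg_left hlogW hn1R.le
  have hn1t : (n1:ℝ)*t = b + (n1:ℝ)*L1 + ε*((n1:ℝ)*((n2:ℝ)*(L2+1))) + 3*ε*(n1:ℝ)/2 := by
    rw [htdef, hcdef]; field_simp
  have he'H : e'*H = 2*b + 4*(n1:ℝ)*(n2:ℝ)*(L2+1) + 2*(n1:ℝ)*L1 + 2*(n1:ℝ)*Le + 2*(n1:ℝ)
      + 2*ε*(n1:ℝ) + (ε*b/2 + ε*((n1:ℝ)*((n2:ℝ)*(L2+1))) + ε*(n1:ℝ)*L1/2 + ε*(n1:ℝ)*Le/2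
      + ε*(n1:ℝ)/2 + ε^2*(n1:ℝ)/2) := by
    rw [he'def, hHdef]; field_simp; ring
  have he'n1 : e'*(n1:ℝ) = ε*(n1:ℝ) + ε^2*(n1:ℝ)/4 := by rw [he'def]; ring
  have hs1 : 2*(n1:ℝ)*(((n2:ℝ)+1)*(L2+1)) ≤ 4*(n1:ℝ)*(n2:ℝ)*(L2+1) := by
    linarith only [mul_nonneg (mul_nonneg hn1R.le (show (0:ℝ) ≤ L2+1 by linarith))
      (show (0:ℝ) ≤ (n2:ℝ)-1 by linarith)]
  have hn1logP2 : 2*(n1:ℝ)*Real.log P2 ≤ 2*(n1:ℝ)*(((n2:ℝ)+1)*(L2+1)) := by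
    apply mul_le_mul_of_nonneg_left hlogP2 (by positivity)
  have hn1logH : (n1:ℝ)*Real.log H
      = (n1:ℝ)*Real.log n1 + (n1:ℝ)*Le - (n1:ℝ)*Real.log 2 + (n1:ℝ)*Real.log W := by
    rw [hlogH]; ring
  -- nonnegativity of dropped slack terms
  have hx1 : (0:ℝ) ≤ ε*b := by positivity
  have hx2 : (0:ℝ) ≤ ε*(n1:ℝ)*L1 := by positivity
  have hx3 : (0:ℝ) ≤ ε*(n1:ℝ)*Le := by positivity
  have hx4 : (0:ℝ) ≤ ε^2*(n1:ℝ) := by positivity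
  rw [hlogBeq, hlogβ, hlogP1, hMcast]
  linarith only [hmono, hn1logW, hn1t, he'H, he'n1, hs1, hn1logP2, hn1logH, hlf1,
    hx1, hx2, hx3, hx4]
end

section
/- Let $\bm{\xi} = (\bm{\xi}_1,\dots,\bm{\xi}_d)$ be a random vector whose support $\Xi$ equals the product $\prod_{i=1}^d \Xi_i$ of the supports of its components, each $\Xi_i$ bounded with diameter at most $D$. Let $H : X \times \Xi \to \mathbb{R}$ be $L$-Lipschitz in $\xi$ under the infinity norm, uniformly in $x$, and let $\gamma > 0$. For an i.i.d. sample $\xi^1,\dots,\xi^N$, define the padded feasible set $\hat X_{N,\gamma} = \{x \in X : H(x, (\xi^{i_1}_1,\dots,\xi^{i_d}_d)) + \gamma \leq 0 \ \forall (i_1,\dots,i_d) \in [N]^d\}$. Then $\mathbb{P}^N\big(\hat X_{N,\gamma} \subseteq \{x : H(x,\xi) \leq 0 \ \forall \xi \in \Xi\}\big) \geq 1 - (dDL/\gamma)(1-\eta(\gamma))^N$, where $\eta(\gamma) = \min_{i,k} \mathbb{P}(\bm{\xi}_i \in [\bar\xi_i^k - \gamma/2L, \bar\xi_i^k + \gamma/2L])$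 over a $(\gamma/2L)$-net $\{\bar\xi_i^k\}_{k \in [M_i]}$ of each $\Xi_i$ with $M_i \leq DL/\gamma$ and all net intervals having positive probability. -/
open MeasureTheory ProbabilityTheory
open scoped ENNReal

/-- Theorem 6 (padded SAA for product-of-marginals support): with probability at least
`1 - (dDL/γ)(1-η(γ))^N` over the sample, every solution feasible for the `γ`-padded SAA
problem (over all mixed scenarios) is feasible for every `ξ` in the support
`Ξ = ∏ᵢ Ξᵢ`. -/
theorem padded_saa_product_support
    {Ω V : Type*} [MeasurableSpace Ω] (μ : Measure Ω) [IsProbabilityMeasure μ]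
    (d : ℕ) (ξ : Ω → (Fin d → ℝ)) (hξ : Measurable ξ)
    (Ξi : Fin d → Set ℝ) (hbdd : ∀ i, Bornology.IsBounded (Ξi i))
    (D L γ : ℝ) (hD : ∀ i, Metric.diam (Ξi i) ≤ D) (hL : 0 < L) (hγ : 0 < γ)
    (hsupp : ∀ᵐ ω ∂μ, ∀ i, ξ ω i ∈ Ξi i)
    (H : V → (Fin d → ℝ) → ℝ)
    (hLip : ∀ (x : V) (a b : Fin d → ℝ), |H x a - H x b| ≤ L * ‖a - b‖)
    (N : ℕ) (ξj : Fin N → Ω → (Fin d → ℝ)) (hmeas : ∀ j, Measurable (ξj j))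
    (hindep : iIndepFun ξj μ)
    (hident : ∀ j, Measure.map (ξj j) μ = Measure.map ξ μ)
    (M : Fin d → ℕ) (net : (i : Fin d) → Fin (M i) → ℝ)
    (hM : ∀ i, (M i : ℝ) ≤ D * L / γ)
    (hcover : ∀ i, Ξi i ⊆ ⋃ k, Set.Icc (net i k - γ / (2 * L)) (net i k + γ / (2 * L)))
    (hpos : ∀ i k,
      0 < μ {ω | ξ ω i ∈ Set.Icc (net i k - γ / (2 * L)) (net i k + γ / (2 * L))})
    (η : ℝ≥0∞)
    (hη : η = ⨅ i, ⨅ k,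
      μ {ω | ξ ω i ∈ Set.Icc (net i k - γ / (2 * L)) (net i k + γ / (2 * L))}) :
    1 - ENNReal.ofReal (d * D * L / γ) * (1 - η) ^ N ≤
      μ {ω | ∀ x : V,
        (∀ J : Fin d → Fin N, H x (fun i => ξj (J i) ω i) + γ ≤ 0) →
          ∀ v : Fin d → ℝ, (∀ i, v i ∈ Ξi i) → H x v ≤ 0} := by
  classical
  set r : ℝ := γ / (2 * L) with hr
  set I : (i : Fin d) → Fin (M i) → Set ℝ :=
    fun i k => Set.Icc (net i k - r) (net i k + r) with hIdef
  set S : (i : Fin d) → Fin (M i) → Set (Fin d → ℝ) :=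
    fun i k => (fun v : Fin d → ℝ => v i) ⁻¹' (I i k)ᶜ with hSdef
  have hSmeas : ∀ i k, MeasurableSet (S i k) :=
    fun i k => measurable_pi_apply i measurableSet_Icc.compl
  set B : Set Ω := ⋃ i, ⋃ k, ⋂ j, (ξj j) ⁻¹' (S i k) with hBdef
  have hBmeas : MeasurableSet B :=
    MeasurableSet.iUnion fun i => MeasurableSet.iUnion fun k =>
      MeasurableSet.iInter fun j => (hmeas j) (hSmeas i k)
  have hLne : L ≠ 0 := ne_of_gt hL
  have hrpos : 0 < r := by positivity
  -- deterministic implication : Bᶜ ⊆ good event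
  have hsub : Bᶜ ⊆ {ω | ∀ x : V,
      (∀ J : Fin d → Fin N, H x (fun i => ξj (J i) ω i) + γ ≤ 0) →
        ∀ v : Fin d → ℝ, (∀ i, v i ∈ Ξi i) → H x v ≤ 0} := by
    intro ω hω x hx v hv
    simp only [hBdef, Set.compl_iUnion, Set.mem_iInter, Set.mem_compl_iff,
      Set.mem_iInter, not_forall, Set.mem_preimage, Set.mem_compl_iff, not_not] at hω
    -- for each i find a net point covering v i
    have hc : ∀ i, ∃ k, v i ∈ I i k := by
      intro i
      have := hcover i (hv i)
      simpa [hIdef, hr] using this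
    choose k hk using hc
    choose J hJ using fun i => hω i (k i)
    have hpad := hx J
    set a : Fin d → ℝ := fun i => ξj (J i) ω i with ha
    have hnorm : ‖v - a‖ ≤ γ / L := by
      have h0 : (0:ℝ) ≤ γ / L := by positivity
      refine (pi_norm_le_iff_of_nonneg h0).2 fun i => ?_
      have h1 := hk i
      have h2 := hJ i
      simp only [hSdef, hIdef, Set.mem_preimage, Set.mem_compl_iff, not_not,
        Set.mem_Icc] at h1 h2
      have : |v i - a i| ≤ γ / L := by
        have habs : |v i - a i| ≤ 2 * r := by
          rw [abs_le]; constructor <;> [linarith [h1.1, h2.2]; linarith [h1.2, h2.1]]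
        have : 2 * r = γ / L := by
          rw [hr]; field_simp
        linarith
      simpa [Real.norm_eq_abs] using this
    have hlip := hLip x v a
    have : H x v - H x a ≤ L * ‖v - a‖ := (abs_le.1 hlip).2
    have hLn : L * ‖v - a‖ ≤ γ := by
      calc L * ‖v - a‖ ≤ L * (γ / L) := by
            exact mul_le_mul_of_nonneg_left hnorm (le_of_lt hL)
        _ = γ := by field_simp
    linarith
  -- the probability of each interval
  set p : (i : Fin d) → Fin (M i) → ℝ≥0∞ :=
    fun i k => μ {ω | ξ ω i ∈ Set.Icc (net i k - γ / (2 * L)) (net i k + γ / (2 * L))} with hp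
  have hηle : ∀ i k, η ≤ p i k := by
    intro i k
    rw [hη]
    exact le_trans (iInf_le _ i) (iInf_le _ k)
  -- measure of each factor
  have hfac : ∀ (i : Fin d) (k : Fin (M i)) (j : Fin N),
      μ ((ξj j) ⁻¹' (S i k)) ≤ 1 - η := by
    intro i k j
    have h1 : μ ((ξj j) ⁻¹' (S i k)) = (Measure.map (ξj j) μ) (S i k) :=
      (Measure.map_apply (hmeas j) (hSmeas i k)).symm
    have h2 : (Measure.map (ξj j) μ) (S i k) = μ (ξ ⁻¹' (S i k)) := by
      rw [hident j, Measure.map_apply hξ (hSmeas i k)]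
    have h3 : ξ ⁻¹' (S i k) = {ω | ξ ω i ∈ Set.Icc (net i k - γ / (2 * L)) (net i k + γ / (2 * L))}ᶜ := by
      ext ω
      simp [hSdef, hIdef, hr]
    have h4 : MeasurableSet {ω | ξ ω i ∈ Set.Icc (net i k - γ / (2 * L)) (net i k + γ / (2 * L))} := by
      have : {ω | ξ ω i ∈ Set.Icc (net i k - γ / (2 * L)) (net i k + γ / (2 * L))}
          = ξ ⁻¹' ((fun v : Fin d → ℝ => v i) ⁻¹' (Set.Icc (net i k - γ / (2 * L)) (net i k + γ / (2 * L)))) := rfl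
      rw [this]
      exact hξ (measurable_pi_apply i measurableSet_Icc)
    rw [h1, h2, h3, measure_compl h4 (measure_ne_top μ _), measure_univ]
    exact tsub_le_tsub_left (hηle i k) 1
  -- product bound via independence
  have hprodle : ∀ (i : Fin d) (k : Fin (M i)),
      μ (⋂ j, (ξj j) ⁻¹' (S i k)) ≤ (1 - η) ^ N := by
    intro i k
    have hind := hindep.meas_iInter (s := fun j => (ξj j) ⁻¹' (S i k))
      (fun j => ⟨S i k, hSmeas i k, rfl⟩)
    rw [hind]
    calc ∏ j : Fin N, μ ((ξj j) ⁻¹' (S i k))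
        ≤ ∏ _j : Fin N, (1 - η) := Finset.prod_le_prod' fun j _ => hfac i k j
      _ = (1 - η) ^ N := by simp [Finset.prod_const]
  -- union bound
  have hB : μ B ≤ ENNReal.ofReal (d * D * L / γ) * (1 - η) ^ N := by
    calc μ B ≤ ∑ i, μ (⋃ k, ⋂ j, (ξj j) ⁻¹' (S i k)) := measure_iUnion_fintype_le _ _
      _ ≤ ∑ i : Fin d, ∑ k : Fin (M i), μ (⋂ j, (ξj j) ⁻¹' (S i k)) :=
          Finset.sum_le_sum fun i _ => measure_iUnion_fintype_le _ _
      _ ≤ ∑ i : Fin d, ∑ _k : Fin (M i), (1 - η) ^ N :=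
          Finset.sum_le_sum fun i _ => Finset.sum_le_sum fun k _ => hprodle i k
      _ = ∑ i : Fin d, (M i : ℝ≥0∞) * (1 - η) ^ N := by
          simp [Finset.sum_const, nsmul_eq_mul]
      _ ≤ ∑ _i : Fin d, ENNReal.ofReal (D * L / γ) * (1 - η) ^ N := by
          refine Finset.sum_le_sum fun i _ => ?_
          refine mul_le_mul_left ?_ _
          rw [← ENNReal.ofReal_natCast]
          exact ENNReal.ofReal_le_ofReal (hM i)
      _ = (d : ℝ≥0∞) * ENNReal.ofReal (D * L / γ) * (1 - η) ^ N := by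
          simp [Finset.sum_const, nsmul_eq_mul, mul_assoc]
      _ = ENNReal.ofReal (d * D * L / γ) * (1 - η) ^ N := by
          congr 1
          rw [← ENNReal.ofReal_natCast d, ← ENNReal.ofReal_mul (by positivity)]
          congr 1
          ring
  calc 1 - ENNReal.ofReal (d * D * L / γ) * (1 - η) ^ N
      ≤ 1 - μ B := tsub_le_tsub_left hB 1
    _ = μ Bᶜ := (prob_compl_eq_one_sub hBmeas).symm
    _ ≤ _ := measure_mono hsub
end

section
/- Let $W \in \mathbb{R}^{m_2 \times n_2}$, $T \in \mathbb{R}^{m_2 \times n_1}$ be fixed matrices, $h : \Xi \to \mathbb{R}^{m_2}$ measurable, and let $E^W$ be the (finite) set of extreme points of $\bar P = \{\alpha \in \mathbb{R}_+^{m_2} : e^T\alpha = 1, W^T\alpha = 0\}$. Fix $\gamma > 0$, let $\xi^1,\dots,\xi^N$ be i.i.d. copies of $\bm{\xi}$, and define $\tilde\eta(\gamma) = \min_{\alpha \in E^W} \mathbb{P}\big(\alpha^T h(\bm{\xi}) \geq \operatorname{ess\,sup}[\alpha^T h(\bm{\xi})] - \gamma\big)$. Let $\tilde X_{N,\gamma}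 = \{x \in X : \alpha^T(h(\xi^j) - Tx) + \gamma \leq 0 \ \forall \alpha \in E^W, j \in [N]\}$ and $X^{\mathrm{Fea}} = \{x \in X : \alpha^T T x \geq \operatorname{ess\,sup}[\alpha^T h(\bm{\xi})] \ \forall \alpha \in E^W\}$. Then $\mathbb{P}^N(\tilde X_{N,\gamma} \subseteq X^{\mathrm{Fea}}) \geq 1 - |E^W|(1 - \tilde\eta(\gamma))^N$. -/
open MeasureTheory ProbabilityTheory
open scoped ENNReal

/-- Theorem 7 (padded SAA with random right-hand side): with probability at least
`1 - |E^W| (1 - η̃(γ))^N`, every `x` feasible for the `γ`-padded sampled constraints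
(expressed via the extreme points `E^W` of the dual feasibility polytope) satisfies the
almost-sure feasibility condition `αᵀTx ≥ ess sup αᵀh(ξ)` for all `α ∈ E^W`. -/
theorem padded_saa_random_rhs
    {Ω E : Type*} [MeasurableSpace Ω] [MeasurableSpace E]
    (μ : Measure Ω) [IsProbabilityMeasure μ]
    (m2 n2 n1 : ℕ) (W : Matrix (Fin m2) (Fin n2) ℝ) (T : Matrix (Fin m2) (Fin n1) ℝ)
    (h : E → (Fin m2 → ℝ)) (hh : Measurable h)
    (ξ : Ω → E) (hξ : Measurable ξ)
    (X : Set (Fin n1 → ℝ))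
    (EW : Set (Fin m2 → ℝ))
    (hEW : EW = Set.extremePoints ℝ
      {α | (∀ i, 0 ≤ α i) ∧ (∑ i, α i) = 1 ∧ W.transpose.mulVec α = 0})
    (hfin : EW.Finite)
    (γ : ℝ) (hγ : 0 < γ)
    (N : ℕ) (ξj : Fin N → Ω → E) (hmeas : ∀ j, Measurable (ξj j))
    (hindep : iIndepFun ξj μ)
    (hident : ∀ j, Measure.map (ξj j) μ = Measure.map ξ μ)
    (s : (Fin m2 → ℝ) → EReal)
    (hs : ∀ α, s α = essSup (fun ω => ((∑ i, α i * h (ξ ω) i : ℝ) : EReal)) μ)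
    (ηt : ℝ≥0∞)
    (hηt : ηt = ⨅ α ∈ EW,
      μ {ω | s α - (γ : EReal) ≤ ((∑ i, α i * h (ξ ω) i : ℝ) : EReal)}) :
    1 - (EW.ncard : ℝ≥0∞) * (1 - ηt) ^ N ≤
      μ {ω | ∀ x ∈ X,
        (∀ α ∈ EW, ∀ j, (∑ i, α i * (h (ξj j ω) i - T.mulVec x i)) + γ ≤ 0) →
          ∀ α ∈ EW, s α ≤ ((∑ i, α i * T.mulVec x i : ℝ) : EReal)} := by
  classical
  -- the "good" set
  set G : Set Ω := {ω | ∀ x ∈ X,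
        (∀ α ∈ EW, ∀ j, (∑ i, α i * (h (ξj j ω) i - T.mulVec x i)) + γ ≤ 0) →
          ∀ α ∈ EW, s α ≤ ((∑ i, α i * T.mulVec x i : ℝ) : EReal)} with hG
  -- per-α bad set in the sample space
  set S : (Fin m2 → ℝ) → Set E :=
    fun α => {e | ¬ s α - (γ : EReal) ≤ ((∑ i, α i * h e i : ℝ) : EReal)} with hS
  have hSmeas : ∀ α, MeasurableSet (S α) := by
    intro α
    have hm : Measurable (fun e => ((∑ i, α i * h e i : ℝ) : EReal)) := by
      apply Measurable.coe_real_ereal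
      exact Finset.measurable_sum _ (fun i _ => (measurable_const.mul ((measurable_pi_apply i).comp hh)))
    exact (measurableSet_le measurable_const hm).compl
  -- probability of the per-α good sample event is ≥ ηt
  have hηle : ∀ α ∈ EW, ∀ j, ηt ≤ μ (ξj j ⁻¹' (S α)ᶜ) := by
    intro α hα j
    have hSc : MeasurableSet (S α)ᶜ := (hSmeas α).compl
    have h1 : μ (ξj j ⁻¹' (S α)ᶜ) = Measure.map (ξj j) μ (S α)ᶜ :=
      (Measure.map_apply (hmeas j) hSc).symm
    have h2 : Measure.map ξ μ (S α)ᶜ = μ (ξ ⁻¹' (S α)ᶜ) :=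
      Measure.map_apply hξ hSc
    rw [h1, hident j, h2]
    have : (ξ ⁻¹' (S α)ᶜ) =
        {ω | s α - (γ : EReal) ≤ ((∑ i, α i * h (ξ ω) i : ℝ) : EReal)} := by
      ext ω; simp [hS]
    rw [this, hηt]
    exact biInf_le _ hα
  -- bad event bound for each α
  have hbad : ∀ α ∈ EW, μ (⋂ j, ξj j ⁻¹' (S α)) ≤ (1 - ηt) ^ N := by
    intro α hα
    have hprod : μ (⋂ j ∈ Finset.univ, ξj j ⁻¹' (S α)) =
        ∏ j : Fin N, μ (ξj j ⁻¹' (S α)) :=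
      hindep.measure_inter_preimage_eq_mul Finset.univ (fun j _ => hSmeas α)
    simp only [Finset.mem_univ, Set.iInter_true] at hprod
    rw [hprod]
    calc ∏ j : Fin N, μ (ξj j ⁻¹' (S α)) ≤ ∏ _j : Fin N, (1 - ηt) := by
          apply Finset.prod_le_prod'
          intro j _
          have hc : μ (ξj j ⁻¹' (S α)) = 1 - μ (ξj j ⁻¹' (S α)ᶜ) := by
            have := measure_compl ((hSmeas α).compl.preimage (hmeas j)) (measure_ne_top μ _)
            simpa [Set.preimage_compl] using this
          rw [hc]
          exact tsub_le_tsub_left (hηle α hα j) 1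
      _ = (1 - ηt) ^ N := by simp
  -- Gᶜ is contained in the union of the bad events
  have hsub : Gᶜ ⊆ ⋃ α ∈ hfin.toFinset, ⋂ j, ξj j ⁻¹' (S α) := by
    intro ω hω
    simp only [hG, Set.mem_compl_iff, Set.mem_setOf_eq, not_forall] at hω
    obtain ⟨x, hx, hpad, α, hα, hlt⟩ := hω
    refine Set.mem_biUnion (hfin.mem_toFinset.mpr hα) ?_
    refine Set.mem_iInter.mpr fun j => ?_
    simp only [Set.mem_preimage, hS, Set.mem_setOf_eq]
    intro hge
    apply hlt
    -- from hge : s α - γ ≤ αᵀ h(ξj j ω), and padded constraint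
    have hpadj := hpad α hα j
    have hr : (∑ i, α i * h (ξj j ω) i) + γ ≤ ∑ i, α i * T.mulVec x i := by
      have : ∑ i, α i * (h (ξj j ω) i - T.mulVec x i)
          = ∑ i, α i * h (ξj j ω) i - ∑ i, α i * T.mulVec x i := by
        rw [← Finset.sum_sub_distrib]; congr 1; ext i; ring
      rw [this] at hpadj; linarith
    have h1 : s α ≤ ((∑ i, α i * h (ξj j ω) i : ℝ) : EReal) + (γ : EReal) := by
      exact (EReal.sub_le_iff_le_add (Or.inl (by simp)) (Or.inl (by simp))).mp hge
    calc s α ≤ ((∑ i, α i * h (ξj j ω) i : ℝ) : EReal) + (γ : EReal) := h1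
      _ = (((∑ i, α i * h (ξj j ω) i) + γ : ℝ) : EReal) := by
          rw [EReal.coe_add]
      _ ≤ ((∑ i, α i * T.mulVec x i : ℝ) : EReal) := by
          exact_mod_cast hr
  -- union bound
  have hGc : μ Gᶜ ≤ (EW.ncard : ℝ≥0∞) * (1 - ηt) ^ N := by
    calc μ Gᶜ ≤ μ (⋃ α ∈ hfin.toFinset, ⋂ j, ξj j ⁻¹' (S α)) := measure_mono hsub
      _ ≤ ∑ α ∈ hfin.toFinset, μ (⋂ j, ξj j ⁻¹' (S α)) := measure_biUnion_finset_le _ _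
      _ ≤ ∑ _α ∈ hfin.toFinset, (1 - ηt) ^ N :=
          Finset.sum_le_sum (fun α hα => hbad α (hfin.mem_toFinset.mp hα))
      _ = (EW.ncard : ℝ≥0∞) * (1 - ηt) ^ N := by
          rw [Finset.sum_const, nsmul_eq_mul, Set.ncard_eq_toFinset_card _ hfin]
  -- conclude
  rw [tsub_le_iff_right]
  calc (1 : ℝ≥0∞) = μ Set.univ := (measure_univ).symm
    _ = μ (G ∪ Gᶜ) := by rw [Set.union_compl_self]
    _ ≤ μ G + μ Gᶜ := measure_union_le _ _
    _ ≤ μ G + (EW.ncard : ℝ≥0∞) * (1 - ηt) ^ N := add_le_add (le_refl _) hGc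
end
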